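/- For every real number q with 0 < q < 1, the function x ↦ (1 - q^x)/x is strictly decreasing on the interval (0, ∞) of real numbers. -/

import Mathlib

open Real

theorem aux_strictAntiOn (L : ℝ) (hL : L < 0) :
    StrictAntiOn (fun x : ℝ => (1 - Real.exp (L * x)) / x) (Set.Ioi 0) := by
  apply strictAntiOn_of_deriv_neg (convex_Ioi 0)
  · exact ContinuousOn.div
      ((continuous_const.sub (Real.continuous_exp.comp (continuous_const.mul continuous_id))).continuousOn)
      continuousOn_id (fun x hx => ne_of_gt hx)
  · intro x hx
    rw [interior_Ioi] at hx
    have hx0 : (0:ℝ) < x := hx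
    have h1 : HasDerivAt (fun x : ℝ => 1 - Real.exp (L * x))
        (-(Real.exp (L * x) * L)) x := by
      have := ((hasDerivAt_id x).const_mul L).exp
      simpa using this.const_sub (1:ℝ)
    have h2 : HasDerivAt (fun x : ℝ => (1 - Real.exp (L * x)) / x)
        ((-(Real.exp (L * x) * L) * x - (1 - Real.exp (L * x)) * 1) / x ^ 2) x :=
      h1.div (hasDerivAt_id x) (ne_of_gt hx0)
    rw [h2.deriv]
    apply div_neg_of_neg_of_pos _ (by positivity)
    -- numerator negative
    set t : ℝ := -(L * x) with ht
    have ht0 : 0 < t := by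
      have := mul_neg_of_neg_of_pos hL hx0
      simp [ht]; linarith
    have hkey : t + 1 < Real.exp t := Real.add_one_lt_exp (ne_of_gt ht0)
    have hE : Real.exp (L * x) = Real.exp (-t) := by rw [ht]; ring_nf
    have hinv : Real.exp (-t) * Real.exp t = 1 := by
      rw [← Real.exp_add]; simp
    have hEpos : 0 < Real.exp (-t) := Real.exp_pos _
    rw [hE]
    have : (t + 1) * Real.exp (-t) < 1 := by
      nlinarith [Real.exp_pos t]
    nlinarith

/-- For every real `q` with `0 < q < 1`, the function `x ↦ (1 - q^x) / x` is strictly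
decreasing on `(0, ∞)`. -/
theorem strictAntiOn_one_sub_rpow_div (q : ℝ) (hq0 : 0 < q) (hq1 : q < 1) :
    StrictAntiOn (fun x : ℝ => (1 - q ^ x) / x) (Set.Ioi 0) := by
  have hL : Real.log q < 0 := Real.log_neg hq0 hq1
  have h := aux_strictAntiOn (Real.log q) hL
  intro a ha b hb hab
  have := h ha hb hab
  simpa [Real.rpow_def_of_pos hq0] using this
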